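/- For constants K > 0, r₀ > 0 and m > 1, sup_{r > 0} min{1/r, r₀ − m/r, K·r − r₀ − 4/r} = min{ r₀/(m+1), 2K/(r₀ + √(r₀² + 20K)) }. -/

import Mathlib

theorem stmt_8 (K r₀ m : ℝ) (hK : 0 < K) (hr₀ : 0 < r₀) (hm : 1 < m) :
    sSup {z : ℝ | ∃ r : ℝ, 0 < r ∧
        z = min (1 / r) (min (r₀ - m / r) (K * r - r₀ - 4 / r))} =
      min (r₀ / (m + 1)) (2 * K / (r₀ + Real.sqrt (r₀ ^ 2 + 20 * K))) := by
  set s := Real.sqrt (r₀ ^ 2 + 20 * K) with hs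
  have hs2 : s ^ 2 = r₀ ^ 2 + 20 * K := Real.sq_sqrt (by nlinarith)
  have hspos : 0 < s := Real.sqrt_pos.mpr (by nlinarith)
  have hsr : r₀ < s := by nlinarith
  set r₁ := (m + 1) / r₀ with hr1def
  set r₂ := (r₀ + s) / (2 * K) with hr2def
  have hr₁pos : 0 < r₁ := div_pos (by linarith) hr₀
  have hr₂pos : 0 < r₂ := div_pos (by linarith) (by linarith)
  have h1 : 1 / r₁ = r₀ / (m + 1) := one_div_div _ _
  have h2 : 1 / r₂ = 2 * K / (r₀ + s) := one_div_div _ _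
  have hne1 : r₀ ≠ 0 := ne_of_gt hr₀
  have hne2 : (r₀ + s) ≠ 0 := by positivity
  have key1 : r₀ - m / r₁ = 1 / r₁ := by
    rw [hr1def]; field_simp; ring
  have key2 : K * r₂ - r₀ - 4 / r₂ = 1 / r₂ := by
    rw [hr2def]; field_simp; ring_nf
    linear_combination hs2
  set M := min (r₀ / (m + 1)) (2 * K / (r₀ + s)) with hM
  have ub : ∀ z ∈ {z : ℝ | ∃ r : ℝ, 0 < r ∧
      z = min (1 / r) (min (r₀ - m / r) (K * r - r₀ - 4 / r))}, z ≤ M := by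
    rintro z ⟨r, hr, rfl⟩
    have hA : min (1 / r) (r₀ - m / r) ≤ r₀ / (m + 1) := by
      rcases le_total r₁ r with h | h
      · refine le_trans (min_le_left _ _) ?_
        rw [← h1]
        exact one_div_le_one_div_of_le hr₁pos h
      · refine le_trans (min_le_right _ _) ?_
        rw [← h1, ← key1]
        have : m / r₁ ≤ m / r :=
          div_le_div_of_nonneg_left (by linarith) hr h
        linarith
    have hB : min (1 / r) (K * r - r₀ - 4 / r) ≤ 2 * K / (r₀ + s) := by
      rcases le_total r₂ r with h | h
      · refine le_trans (min_le_left _ _) ?_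
        rw [← h2]
        exact one_div_le_one_div_of_le hr₂pos h
      · refine le_trans (min_le_right _ _) ?_
        rw [← h2, ← key2]
        have h4 : 4 / r₂ ≤ 4 / r :=
          div_le_div_of_nonneg_left (by norm_num) hr h
        nlinarith
    apply le_min
    · exact le_trans (min_le_min le_rfl (min_le_left _ _)) hA
    · exact le_trans (min_le_min le_rfl (min_le_right _ _)) hB
  have mem : M ∈ {z : ℝ | ∃ r : ℝ, 0 < r ∧
      z = min (1 / r) (min (r₀ - m / r) (K * r - r₀ - 4 / r))} := by
    rcases le_total r₁ r₂ with h | h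
    · refine ⟨r₂, hr₂pos, ?_⟩
      have h12 : 1 / r₂ ≤ 1 / r₁ := one_div_le_one_div_of_le hr₁pos h
      have hmono : 1 / r₂ ≤ r₀ - m / r₂ := by
        have : m / r₂ ≤ m / r₁ :=
          div_le_div_of_nonneg_left (by linarith) hr₁pos h
        rw [← key1] at h12
        linarith
      rw [hM, ← h1, ← h2, key2, min_eq_right hmono, min_self,
        min_eq_right h12]
    · refine ⟨r₁, hr₁pos, ?_⟩
      have h21 : 1 / r₁ ≤ 1 / r₂ := one_div_le_one_div_of_le hr₂pos h
      have hmono : 1 / r₁ ≤ K * r₁ - r₀ - 4 / r₁ := by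
        have h4 : 4 / r₁ ≤ 4 / r₂ :=
          div_le_div_of_nonneg_left (by norm_num) hr₂pos h
        have hKr : K * r₂ ≤ K * r₁ := mul_le_mul_of_nonneg_left h hK.le
        linarith [key2, h21]
      rw [hM, ← h1, ← h2, key1, min_eq_left hmono, min_self,
        min_eq_left h21]
  exact le_antisymm (csSup_le ⟨M, mem⟩ ub) (le_csSup ⟨M, ub⟩ mem)
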